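/- Let A(z_1), B(z_2) be N×N generating matrices (N = 2^n) of generalized-Boolean-function matrices with entries a_{r,i}: (ZMod 2)^{m_1} → ZMod q and b_{i,s}: (ZMod 2)^{m_2} → ZMod q, and let D(z_0) be the generalized delay matrix of order 2^n in n fresh variables. Then C(z_0,z_1,z_2) = A(z_1)·D(z_0)·B(z_2) is the generating matrix of the function matrix with (r,s) entry c_{r,s}(x_0,x_1,x_2) = Σ_{i=0}^{N-1} (a_{r,i}(x_1) + b_{i,s}(x_2))·g_i(x_0), where g_i: (ZMod 2)^n → ZMod q are the delta-basis functions on binary expansions. Moreover, if A and B are para-unitary then so is C. -/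

import Mathlib

open scoped BigOperators

noncomputable def omg (q : ℕ) : ℂ := Complex.exp (2 * Real.pi * Complex.I / q)

noncomputable def ec (q : ℕ) (a : ZMod q) : ℂ := omg q ^ a.val

/-- The monomial `z^x` for a Boolean multi-index `x`. -/
noncomputable def mon {d : ℕ} (z : Fin d → ℂ) (x : Fin d → ZMod 2) : ℂ :=
  ∏ k, z k ^ (x k).val

/-- Generating matrix of a GBF matrix. -/
noncomputable def genM (q Nn d : ℕ)
    (a : Fin Nn → Fin Nn → (Fin d → ZMod 2) → ZMod q) (z : Fin d → ℂ) :
    Matrix (Fin Nn) (Fin Nn) ℂ :=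
  fun i j => ∑ x : Fin d → ZMod 2, ec q (a i j x) * mon z x

/-- Conjugate transpose (coefficients conjugated) of the generating matrix, at `z`. -/
noncomputable def genMDag (q Nn d : ℕ)
    (a : Fin Nn → Fin Nn → (Fin d → ZMod 2) → ZMod q) (z : Fin d → ℂ) :
    Matrix (Fin Nn) (Fin Nn) ℂ :=
  fun i j => ∑ x : Fin d → ZMod 2, ec q (-(a j i x)) * mon z x

/-- The generalized delay matrix of order `2^n`, as a diagonal matrix. -/
noncomputable def gdelayMat (n : ℕ) (z : Fin n → ℂ) :
    Matrix (Fin (2 ^ n)) (Fin (2 ^ n)) ℂ :=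
  Matrix.diagonal (fun i : Fin (2 ^ n) => ∏ v : Fin n, z v ^ ((i : ℕ) / 2 ^ (v : ℕ) % 2))

/-- Delta-basis function `g_i : (ZMod 2)^n → ZMod q` for `i : Fin (2^n)`. -/
def gfun (q n : ℕ) (i : Fin (2 ^ n)) (x : Fin n → ZMod 2) : ZMod q :=
  ∏ v : Fin n,
    if ((i : ℕ) / 2 ^ (v : ℕ)) % 2 = 1 then ((x v).val : ZMod q)
    else 1 - ((x v).val : ZMod q)

/- ### Auxiliary lemmas -/

lemma omg_pow_q {q : ℕ} (hq : 0 < q) : omg q ^ q = 1 := by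
  rw [omg, ← Complex.exp_nat_mul]
  have : (q : ℂ) ≠ 0 := Nat.cast_ne_zero.mpr hq.ne'
  rw [mul_div_cancel₀ _ this, Complex.exp_two_pi_mul_I]

lemma omg_pow_mod {q : ℕ} (hq : 0 < q) (k : ℕ) : omg q ^ (k % q) = omg q ^ k := by
  conv_rhs => rw [← Nat.div_add_mod k q]
  rw [pow_add, pow_mul, omg_pow_q hq, one_pow, one_mul]

lemma ec_add {q : ℕ} (hq : 0 < q) (u v : ZMod q) : ec q (u + v) = ec q u * ec q v := by
  haveI : NeZero q := ⟨hq.ne'⟩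
  rw [ec, ec, ec, ZMod.val_add, omg_pow_mod hq, pow_add]

def bits (n : ℕ) (i : Fin (2 ^ n)) : Fin n → ZMod 2 :=
  fun v => (((i : ℕ) / 2 ^ (v : ℕ) % 2 : ℕ) : ZMod 2)

lemma bits_val (n : ℕ) (i : Fin (2 ^ n)) (v : Fin n) :
    (bits n i v).val = (i : ℕ) / 2 ^ (v : ℕ) % 2 := by
  simp [bits, ZMod.val_natCast, Nat.mod_mod_of_dvd]

lemma bits_inj {n : ℕ} {i j : Fin (2 ^ n)} (h : bits n i = bits n j) : i = j := by
  apply Fin.ext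
  apply Nat.eq_of_testBit_eq
  intro k
  rw [Nat.testBit_eq_decide_div_mod_eq, Nat.testBit_eq_decide_div_mod_eq]
  by_cases hk : k < n
  · have := congrFun h ⟨k, hk⟩
    have h2 := congrArg ZMod.val this
    rw [bits_val, bits_val] at h2
    simp [h2]
  · push_neg at hk
    have h1 : (i : ℕ) / 2 ^ k = 0 :=
      Nat.div_eq_of_lt (lt_of_lt_of_le i.isLt (Nat.pow_le_pow_right (by norm_num) hk))
    have h2 : (j : ℕ) / 2 ^ k = 0 :=
      Nat.div_eq_of_lt (lt_of_lt_of_le j.isLt (Nat.pow_le_pow_right (by norm_num) hk))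
    rw [h1, h2]

lemma bits_bijective (n : ℕ) : Function.Bijective (bits n) := by
  rw [Fintype.bijective_iff_injective_and_card]
  constructor
  · intro i j h; exact bits_inj h
  · rw [Fintype.card_fin, Fintype.card_eq_nat_card, Nat.card_fun, Nat.card_zmod,
      Nat.card_eq_fintype_card (α := Fin n), Fintype.card_fin]

lemma gfun_delta (q n : ℕ) (j i : Fin (2 ^ n)) :
    gfun q n j (bits n i) = if j = i then 1 else 0 := by
  by_cases h : j = i
  · subst h
    simp only [if_pos rfl, gfun]
    apply Finset.prod_eq_one
    intro v _
    rcases Nat.mod_two_eq_zero_or_one ((j : ℕ) / 2 ^ (v : ℕ)) with h0 | h1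
    · simp [h0, bits_val, sub_zero]
    · simp [h1, bits_val]
  · rw [if_neg h]
    have hv : ∃ v : Fin n, (j : ℕ) / 2 ^ (v : ℕ) % 2 ≠ (i : ℕ) / 2 ^ (v : ℕ) % 2 := by
      by_contra hc
      push_neg at hc
      exact h (bits_inj (funext fun v => by simp only [bits, hc v]))
    obtain ⟨v, hv⟩ := hv
    apply Finset.prod_eq_zero (Finset.mem_univ v)
    rcases Nat.mod_two_eq_zero_or_one ((j : ℕ) / 2 ^ (v : ℕ)) with h0 | h1 <;>
      rcases Nat.mod_two_eq_zero_or_one ((i : ℕ) / 2 ^ (v : ℕ)) with g0 | g1 <;>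
      first
        | (exact absurd (‹_› : _ = (0:ℕ)).symm ▸ hv rfl)
        | simp_all [bits_val]

lemma sum_gfun {q n : ℕ} (c : Fin (2 ^ n) → ZMod q) (i : Fin (2 ^ n)) :
    ∑ j, c j * gfun q n j (bits n i) = c i := by
  simp [gfun_delta, mul_ite, Finset.sum_ite_eq']

lemma mon_bits {n : ℕ} (z : Fin n → ℂ) (i : Fin (2 ^ n)) :
    mon z (bits n i) = ∏ v : Fin n, z v ^ ((i : ℕ) / 2 ^ (v : ℕ) % 2) := by
  simp [mon, bits_val]

lemma gdelay_mul_inv (n : ℕ) (z : Fin n → ℂ) (hz : ∀ k, z k ≠ 0) :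
    gdelayMat n z * gdelayMat n (fun k => (z k)⁻¹) = 1 := by
  rw [gdelayMat, gdelayMat, Matrix.diagonal_mul_diagonal]
  have h1 : ∀ i : Fin (2 ^ n),
      (∏ v : Fin n, z v ^ ((i : ℕ) / 2 ^ (v : ℕ) % 2)) *
        ∏ v : Fin n, (z v)⁻¹ ^ ((i : ℕ) / 2 ^ (v : ℕ) % 2) = 1 := by
    intro i
    rw [← Finset.prod_mul_distrib]
    exact Finset.prod_eq_one fun v _ => by rw [← mul_pow, mul_inv_cancel₀ (hz v), one_pow]
  simp only [h1, Matrix.diagonal_one]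

/-- `C(z₀,z₁,z₂) = A(z₁)·D(z₀)·B(z₂)` is the generating matrix of the function matrix with
entries `c_{r,s}(x₀,x₁,x₂) = ∑_i (a_{r,i}(x₁) + b_{i,s}(x₂))·g_i(x₀)`; moreover if `A` and
`B` are para-unitary then so is `C`. -/
theorem stmt18 (q n m1 m2 : ℕ) (hq : 0 < q)
    (a : Fin (2 ^ n) → Fin (2 ^ n) → (Fin m1 → ZMod 2) → ZMod q)
    (b : Fin (2 ^ n) → Fin (2 ^ n) → (Fin m2 → ZMod 2) → ZMod q) :
    (∀ (z0 : Fin n → ℂ) (z1 : Fin m1 → ℂ) (z2 : Fin m2 → ℂ) (r s : Fin (2 ^ n)),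
      (genM q (2 ^ n) m1 a z1 * gdelayMat n z0 * genM q (2 ^ n) m2 b z2) r s =
        ∑ x0 : Fin n → ZMod 2, ∑ x1 : Fin m1 → ZMod 2, ∑ x2 : Fin m2 → ZMod 2,
          ec q (∑ i : Fin (2 ^ n), (a r i x1 + b i s x2) * gfun q n i x0) *
            (mon z0 x0 * mon z1 x1 * mon z2 x2)) ∧
    ((∃ cA : ℝ, ∀ z1 : Fin m1 → ℂ, (∀ k, z1 k ≠ 0) →
        genM q (2 ^ n) m1 a z1 * genMDag q (2 ^ n) m1 a (fun k => (z1 k)⁻¹) =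
          (cA : ℂ) • (1 : Matrix (Fin (2 ^ n)) (Fin (2 ^ n)) ℂ)) →
      (∃ cB : ℝ, ∀ z2 : Fin m2 → ℂ, (∀ k, z2 k ≠ 0) →
        genM q (2 ^ n) m2 b z2 * genMDag q (2 ^ n) m2 b (fun k => (z2 k)⁻¹) =
          (cB : ℂ) • (1 : Matrix (Fin (2 ^ n)) (Fin (2 ^ n)) ℂ)) →
      ∃ cC : ℝ, ∀ (z0 : Fin n → ℂ) (z1 : Fin m1 → ℂ) (z2 : Fin m2 → ℂ),
        (∀ k, z0 k ≠ 0) → (∀ k, z1 k ≠ 0) → (∀ k, z2 k ≠ 0) →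
          (genM q (2 ^ n) m1 a z1 * gdelayMat n z0 * genM q (2 ^ n) m2 b z2) *
            (genMDag q (2 ^ n) m2 b (fun k => (z2 k)⁻¹) *
              gdelayMat n (fun k => (z0 k)⁻¹) *
              genMDag q (2 ^ n) m1 a (fun k => (z1 k)⁻¹)) =
            (cC : ℂ) • (1 : Matrix (Fin (2 ^ n)) (Fin (2 ^ n)) ℂ)) := by
  constructor
  · intro z0 z1 z2 r s
    have key := Equiv.sum_comp (Equiv.ofBijective (bits n) (bits_bijective n))
      (fun x0 : Fin n → ZMod 2 =>
        ∑ x1 : Fin m1 → ZMod 2, ∑ x2 : Fin m2 → ZMod 2,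
          ec q (∑ i : Fin (2 ^ n), (a r i x1 + b i s x2) * gfun q n i x0) *
            (mon z0 x0 * mon z1 x1 * mon z2 x2))
    rw [← key]
    simp only [Equiv.ofBijective_apply]
    rw [Matrix.mul_apply]
    simp only [gdelayMat, Matrix.mul_diagonal, genM]
    refine Finset.sum_congr rfl fun i _ => ?_
    simp only [sum_gfun]
    simp only [ec_add hq, mon_bits, Finset.sum_mul, Finset.mul_sum]
    rw [Finset.sum_comm]
    exact Finset.sum_congr rfl fun x1 _ => Finset.sum_congr rfl fun x2 _ => by ring
  · rintro ⟨cA, hA⟩ ⟨cB, hB⟩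
    refine ⟨cA * cB, ?_⟩
    intro z0 z1 z2 h0 h1 h2
    have hD : gdelayMat n z0 * gdelayMat n (fun k => (z0 k)⁻¹) = 1 :=
      gdelay_mul_inv n z0 h0
    set A := genM q (2 ^ n) m1 a z1
    set B := genM q (2 ^ n) m2 b z2
    set A' := genMDag q (2 ^ n) m1 a (fun k => (z1 k)⁻¹)
    set B' := genMDag q (2 ^ n) m2 b (fun k => (z2 k)⁻¹)
    set D := gdelayMat n z0
    set D' := gdelayMat n (fun k => (z0 k)⁻¹)
    have e1 : A * D * B * (B' * D' * A') = A * (D * ((B * B') * (D' * A'))) := by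
      simp only [Matrix.mul_assoc]
    rw [e1, hB z2 h2, Matrix.smul_mul, Matrix.one_mul, Matrix.mul_smul, ← Matrix.mul_assoc,
      hD, Matrix.one_mul, Matrix.mul_smul, hA z1 h1, smul_smul]
    push_cast
    rw [mul_comm (cB : ℂ) (cA : ℂ)]
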